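/- Let μ ≤ λ be infinite cardinals with λ strong limit and cf(λ) ≥ μ, and suppose that for every ν < λ there is an ultrafilter D over some index set such that the product space P := ∏_{j∈J} X_j is D-compact and D is (μ,ν)-regular. If every D-compact space (for a (μ,ν)-regular D) is [μ,ν]-compact, then P being [μ,ν]-compact for all ν < λ together with [cf λ, cf λ]-compactness implies P is [μ,λ]-compact. -/

import Mathlib

open Cardinal

/-- `X` is `[μ,λ]`-compact: every open cover by at most `lam` sets
has a subcover by fewer than `μ` sets. -/
def CptIn (μ lam : Cardinal) (X : Type) [TopologicalSpace X] : Prop :=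
  ∀ 𝒰 : Set (Set X), (∀ U ∈ 𝒰, IsOpen U) → #𝒰 ≤ lam → ⋃₀ 𝒰 = Set.univ →
    ∃ 𝒱 ⊆ 𝒰, #𝒱 < μ ∧ ⋃₀ 𝒱 = Set.univ

/-- `p` is a `D`-limit point of the sequence `x`. -/
def IsDLimit {I X : Type} [TopologicalSpace X] (D : Ultrafilter I) (x : I → X) (p : X) : Prop :=
  ∀ U : Set X, IsOpen U → p ∈ U → {i | x i ∈ U} ∈ D

/-- `X` is `D`-compact. -/
def DCompact {I : Type} (D : Ultrafilter I) (X : Type) [TopologicalSpace X] : Prop :=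
  ∀ x : I → X, ∃ p : X, IsDLimit D x p

/-- `D` is `μ`-complete. -/
def MuComplete {I : Type} (μ : Cardinal) (D : Ultrafilter I) : Prop :=
  ∀ S : Set (Set I), #S < μ → (∀ A ∈ S, A ∈ D) → ⋂₀ S ∈ D

/-- `D` is `(μ,lam)`-regular: there is a family of `lam`-many members of `D`
every intersection of `μ`-many of which is empty. -/
def RegUF {I : Type} (μ lam : Cardinal) (D : Ultrafilter I) : Prop :=
  ∃ (A : Type) (Z : A → Set I), #A = lam ∧ (∀ a, Z a ∈ D) ∧
    ∀ S : Set A, #S = μ → ⋂ a ∈ S, Z a = ∅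

/-- The ordinal space of a cardinal, with the order topology. -/
noncomputable def ordSpace (c : Cardinal) : Type := c.ord.ToType

noncomputable instance (c : Cardinal) : LinearOrder (ordSpace c) :=
  inferInstanceAs (LinearOrder c.ord.ToType)
noncomputable instance (c : Cardinal) : TopologicalSpace (ordSpace c) := Preorder.topology _
instance (c : Cardinal) : OrderTopology (ordSpace c) := ⟨rfl⟩

theorem stmt14 (μ lam : Cardinal) (J : Type) (X : J → Type) [∀ j, TopologicalSpace (X j)]
    (hμ : ℵ₀ ≤ μ) (hml : μ ≤ lam) (hsl : lam.IsStrongLimit) (hcf : μ ≤ lam.ord.cof)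
    (hD : ∀ ν : Cardinal, ν < lam →
      ∃ (I : Type) (D : Ultrafilter I), DCompact D (∀ j, X j) ∧ RegUF μ ν D)
    (hlem : ∀ (ν : Cardinal) (I Y : Type) (D : Ultrafilter I) (tY : TopologicalSpace Y),
      RegUF μ ν D → DCompact D Y → CptIn μ ν Y) :
    (∀ ν : Cardinal, ν < lam → CptIn μ ν (∀ j, X j)) →
      CptIn (lam.ord.cof) (lam.ord.cof) (∀ j, X j) → CptIn μ lam (∀ j, X j) := by
  intro h1 h2 𝒰 hop hle hcov
  have hal : ℵ₀ ≤ lam := hμ.trans hml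
  rcases lt_or_eq_of_le hle with hlt | heq
  · exact h1 _ hlt 𝒰 hop le_rfl hcov
  -- #𝒰 = lam : index 𝒰 by lam.ord.toType
  obtain ⟨e⟩ : Nonempty (↥𝒰 ≃ lam.ord.ToType) := by
    rw [← Cardinal.eq, heq, Cardinal.mk_toType, Cardinal.card_ord]
  haveI : IsWellOrder lam.ord.ToType (· < ·) := isWellOrder_lt
  obtain ⟨S, hSunb, hScard⟩ :=
    Order.exists_cof_eq lam.ord.ToType
  rw [Ordinal.cof_toType] at hScard
  -- the small pieces
  set Fam : lam.ord.ToType → Set (Set (∀ j, X j)) :=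
    fun s => {U | ∃ h : U ∈ 𝒰, e ⟨U, h⟩ ≤ s} with hFam
  have hFamsub : ∀ s, Fam s ⊆ 𝒰 := fun s U hU => hU.1
  have hFamcard : ∀ s, #(Fam s) < lam := by
    intro s
    have hinj : #(Fam s) ≤ #(Set.Iic s) := by
      refine Cardinal.mk_le_of_injective (f := fun U => ⟨e ⟨U.1, U.2.1⟩, U.2.2⟩) ?_
      intro U V h
      simp only [Subtype.mk.injEq] at h
      have := congrArg Subtype.val (e.injective (congrArg Subtype.val h))
      exact Subtype.ext this
    refine hinj.trans_lt ?_
    have : Set.Iic s = insert s (Set.Iio s) := by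
      ext x; simp [le_iff_lt_or_eq, or_comm]
    rw [this]
    refine (Cardinal.mk_insert_le).trans_lt ?_
    exact Cardinal.add_lt_of_lt hal (Cardinal.mk_Iio_ord_toType s) (Cardinal.one_lt_aleph0.trans_le hal)
  -- the coarse cover
  set W : lam.ord.ToType → Set (∀ j, X j) := fun s => ⋃₀ Fam s with hW
  obtain ⟨𝒱', h𝒱'sub, h𝒱'card, h𝒱'cov⟩ := h2 (W '' S)
    (by
      rintro V ⟨s, _, rfl⟩
      exact isOpen_sUnion fun U hU => hop U (hFamsub s hU))
    ((Cardinal.mk_image_le).trans hScard.le)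
    (by
      apply Set.eq_univ_of_forall
      intro x
      have hx : x ∈ ⋃₀ 𝒰 := hcov ▸ Set.mem_univ x
      obtain ⟨U, hU, hxU⟩ := hx
      obtain ⟨s, hsS, hs⟩ := hSunb (e ⟨U, hU⟩)
      exact ⟨W s, ⟨s, hsS, rfl⟩, U, ⟨hU, hs⟩, hxU⟩)
  -- choose indices for the chosen coarse cover
  choose g hgS hgW using fun V : ↥𝒱' => show ∃ s ∈ S, W s = V.1 from h𝒱'sub V.2
  set 𝒰' : Set (Set (∀ j, X j)) := ⋃ v : ↥𝒱', Fam (g v) with h𝒰'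
  have h𝒰'sub : 𝒰' ⊆ 𝒰 := Set.iUnion_subset fun v => hFamsub _
  have hcard𝒱' : #(↥𝒱') < lam.ord.cof := h𝒱'card
  have hν : #𝒰' < lam := by
    refine (Cardinal.mk_iUnion_le _).trans_lt ?_
    refine Cardinal.mul_lt_of_lt hal (hcard𝒱'.trans_le (Ordinal.cof_ord_le lam)) ?_
    exact Ordinal.iSup_lt hcard𝒱' fun v => hFamcard (g v)
  obtain ⟨𝒱, h𝒱sub, h𝒱card, h𝒱cov⟩ := h1 _ hν 𝒰'
    (fun U hU => hop U (h𝒰'sub hU)) le_rfl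
    (by
      apply Set.eq_univ_of_forall
      intro x
      have hx : x ∈ ⋃₀ 𝒱' := h𝒱'cov ▸ Set.mem_univ x
      obtain ⟨V, hV, hxV⟩ := hx
      have : x ∈ W (g ⟨V, hV⟩) := (hgW ⟨V, hV⟩).symm ▸ hxV
      obtain ⟨U, hU, hxU⟩ := this
      exact ⟨U, Set.mem_iUnion.2 ⟨⟨V, hV⟩, hU⟩, hxU⟩)
  exact ⟨𝒱, h𝒱sub.trans h𝒰'sub, h𝒱card, h𝒱cov⟩
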